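/- With λ_i = (iπ)² and S_Δt = (I-ΔtA)^{-1} acting diagonally by S_Δt e_i = (1+λ_iΔt)^{-1} e_i, for every β ∈ [0, 3/4) and κ ∈ (0, 3/4 - β) there exists C_κ(β) such that for every n ∈ ℕ*, ∑_{i=1}^∞ λ_i^{2β} (1+λ_iΔt)^{-2n} ≤ C_κ(β) (nΔt)^{-1/2 - 2β - 2κ}. -/

import Mathlib

open Real

/- Hilbert–Schmidt type bound for `(-A)^β S_Δt^n` with `λ_i = (iπ)²`:
   for β ∈ [0,3/4) and κ ∈ (0, 3/4-β) there is C with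
   `∑_i λ_i^{2β} (1+λ_iΔt)^{-2n} ≤ C (nΔt)^{-1/2-2β-2κ}` for all n ∈ ℕ*. -/
theorem implicit_euler_radonifying_bound (β κ : ℝ)
    (hβ0 : 0 ≤ β) (hβ : β < 3 / 4) (hκ0 : 0 < κ) (hκ : κ < 3 / 4 - β) :
    ∃ C : ℝ, 0 < C ∧
      ∀ Δt : ℝ, 0 < Δt → ∀ n : ℕ, 1 ≤ n →
        (∑' i : ℕ, ((((i : ℝ) + 1) * Real.pi) ^ 2) ^ (2 * β)
            * ((1 + (((i : ℝ) + 1) * Real.pi) ^ 2 * Δt) ^ (2 * n))⁻¹)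
          ≤ C * ((n : ℝ) * Δt) ^ (-(1 / 2) - 2 * β - 2 * κ) := by
  set r : ℝ := 1 / 2 + 2 * β + 2 * κ with hrdef
  have hr0 : 0 < r := by dsimp [r]; linarith
  have hr2 : r ≤ 2 := by dsimp [r]; linarith
  set p : ℝ := -(1 + 4 * κ) with hpdef
  have hp : p < -1 := by dsimp [p]; linarith
  set g : ℕ → ℝ := fun i => (((i : ℝ) + 1) * Real.pi) ^ p with hgdef
  have hgsum : Summable g := by
    have h1 : Summable (fun i : ℕ => (((i : ℝ) + 1)) ^ p) := by
      have := (Real.summable_nat_rpow (p := p)).mpr hp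
      have h2 := (summable_nat_add_iff (f := fun n : ℕ => (n : ℝ) ^ p) 1).mpr this
      convert h2 using 2 with i
      · rfl
      push_cast
      rfl
    have : g = fun i : ℕ => (((i : ℝ) + 1)) ^ p * Real.pi ^ p := by
      funext i
      dsimp [g]
      rw [Real.mul_rpow (by positivity) Real.pi_pos.le]
    rw [this]
    exact h1.mul_right _
  refine ⟨∑' i, g i, ?_, ?_⟩
  · exact Summable.tsum_pos hgsum (fun i => Real.rpow_nonneg (by positivity) p) 0
      (Real.rpow_pos_of_pos (by positivity) p)
  intro Δt hΔt n hn
  have hn0 : 0 < (n : ℝ) := by exact_mod_cast hn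
  have hnΔt : 0 < (n : ℝ) * Δt := by positivity
  have hexp : -(1 / 2) - 2 * β - 2 * κ = -r := by rw [hrdef]; ring
  rw [hexp]
  have key : ∀ i : ℕ,
      ((((i : ℝ) + 1) * Real.pi) ^ 2) ^ (2 * β)
          * ((1 + (((i : ℝ) + 1) * Real.pi) ^ 2 * Δt) ^ (2 * n))⁻¹
        ≤ g i * ((n : ℝ) * Δt) ^ (-r) := by
    intro i
    set a : ℝ := ((i : ℝ) + 1) * Real.pi with hadef
    have ha : 0 < a := by dsimp [a]; positivity
    set x : ℝ := a ^ 2 * Δt with hxdef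
    have hx : 0 < x := by dsimp [x]; positivity
    have hy : 0 < (n : ℝ) * x := by positivity
    -- main power inequality
    have hpow : ((n : ℝ) * x) ^ r ≤ (1 + x) ^ (2 * n) := by
      have h1 : 1 + (n : ℝ) * x ≤ (1 + x) ^ n := by
        have := one_add_mul_le_pow (a := x) (by linarith) n
        linarith [this]
      have h2 : ((n : ℝ) * x) ^ r ≤ (1 + (n : ℝ) * x) ^ 2 := by
        set y := (n : ℝ) * x
        rcases le_or_gt y 1 with hy1 | hy1
        · have : y ^ r ≤ 1 := Real.rpow_le_one hy.le hy1 hr0.le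
          nlinarith [this, hy]
        · calc y ^ r ≤ y ^ (2 : ℝ) :=
                Real.rpow_le_rpow_of_exponent_le hy1.le hr2
            _ = y ^ (2 : ℕ) := Real.rpow_natCast y 2
            _ ≤ (1 + y) ^ 2 := by nlinarith
      calc ((n : ℝ) * x) ^ r ≤ (1 + (n : ℝ) * x) ^ 2 := h2
        _ ≤ ((1 + x) ^ n) ^ 2 := by
            apply pow_le_pow_left₀ (by positivity) h1
        _ = (1 + x) ^ (2 * n) := by rw [mul_comm 2 n, pow_mul]
    have hinv : ((1 + x) ^ (2 * n))⁻¹ ≤ ((n : ℝ) * x) ^ (-r) := by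
      rw [Real.rpow_neg hy.le]
      exact inv_anti₀ (Real.rpow_pos_of_pos hy r) hpow
    have hterm : (a ^ 2) ^ (2 * β) * ((1 + x) ^ (2 * n))⁻¹
        ≤ (a ^ 2) ^ (2 * β) * ((n : ℝ) * x) ^ (-r) := by
      apply mul_le_mul_of_nonneg_left hinv (Real.rpow_nonneg (by positivity) _)
    refine hterm.trans_eq ?_
    have hsq : ∀ s : ℝ, (a ^ 2) ^ s = a ^ (2 * s) := by
      intro s
      rw [← Real.rpow_natCast a 2, ← Real.rpow_mul ha.le]
      norm_num
    have hxsplit : ((n : ℝ) * x) ^ (-r) = ((n : ℝ) * Δt) ^ (-r) * (a ^ 2) ^ (-r) := by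
      have : (n : ℝ) * x = ((n : ℝ) * Δt) * a ^ 2 := by rw [hxdef]; ring
      rw [this, Real.mul_rpow hnΔt.le (by positivity)]
    rw [hxsplit, hsq, hsq]
    have hcomb : a ^ (2 * (2 * β)) * (((n : ℝ) * Δt) ^ (-r) * a ^ (2 * -r))
        = a ^ (2 * (2 * β) + 2 * -r) * ((n : ℝ) * Δt) ^ (-r) := by
      rw [Real.rpow_add ha]; ring
    rw [hcomb]
    have hpe : 2 * (2 * β) + 2 * -r = p := by rw [hrdef, hpdef]; ring
    rw [hpe]
  have hRHSsum : Summable (fun i : ℕ => g i * ((n : ℝ) * Δt) ^ (-r)) :=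
    hgsum.mul_right _
  have hLHSsum : Summable (fun i : ℕ =>
      ((((i : ℝ) + 1) * Real.pi) ^ 2) ^ (2 * β)
          * ((1 + (((i : ℝ) + 1) * Real.pi) ^ 2 * Δt) ^ (2 * n))⁻¹) := by
    apply Summable.of_nonneg_of_le (fun i => by positivity) key hRHSsum
  calc (∑' i : ℕ, ((((i : ℝ) + 1) * Real.pi) ^ 2) ^ (2 * β)
          * ((1 + (((i : ℝ) + 1) * Real.pi) ^ 2 * Δt) ^ (2 * n))⁻¹)
      ≤ ∑' i : ℕ, g i * ((n : ℝ) * Δt) ^ (-r) := Summable.tsum_le_tsum key hLHSsum hRHSsum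
    _ = (∑' i, g i) * ((n : ℝ) * Δt) ^ (-r) := tsum_mul_right
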